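/- Let X be a random variable with values in [0,1]^d admitting a density with respect to the Lebesgue measure on [0,1]^d, let Z be a real-valued square-integrable random variable, and let ((X_m, Z_m))_{m ≥ 1} be a sequence of independent random variables each distributed as (X, Z). For a ∈ [0,1]^d write B_a = Π_{j=1}^d [0, a(j)). Define ν_M(α, β, a) = (1/M) Σ_{m=1}^M (Z_m − α·1{X_m ∈ B_a} − β·1{X_m ∉ B_a})² and ν(α, β, a) = E[(Z − α·1{X ∈ B_a} − β·1{X ∉ B_a})²]. Then, for every C > 0, almost surely inf_{a ∈ [0,1]^d, |α| ≤ C, |β| ≤ C} ν_M(α, β, a) → inf_{a ∈ [0,1]^d, |α| ≤ C, |β| ≤ C} ν(α, β, a) as M → ∞. -/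

import Mathlib

open MeasureTheory ProbabilityTheory Filter

/-- The squared loss `(z − α·1{x ∈ B_a} − β·1{x ∉ B_a})²`, where
`B_a = Π_j [0, a(j))`, as a function of the data `(x, z)` and parameters `(α, β, a)`. -/
noncomputable def treeLoss {d : ℕ} (x : Fin d → ℝ) (z : ℝ) (p : ℝ × ℝ × (Fin d → ℝ)) : ℝ :=
  (z - p.1 * (Set.univ.pi fun j => Set.Ico (0 : ℝ) (p.2.2 j)).indicator (fun _ => (1 : ℝ)) x
     - p.2.1 * ((Set.univ.pi fun j => Set.Ico (0 : ℝ) (p.2.2 j))ᶜ.indicator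
        (fun _ => (1 : ℝ)) x)) ^ 2

namespace TreeAux
open scoped Classical

variable {d : ℕ}

/-- The box `Π_j [0, a j)`. -/
def Box (a : Fin d → ℝ) : Set (Fin d → ℝ) := Set.univ.pi fun j => Set.Ico (0 : ℝ) (a j)

lemma mem_Box {a x : Fin d → ℝ} : x ∈ Box a ↔ ∀ j, 0 ≤ x j ∧ x j < a j := by
  simp [Box, Set.mem_pi]

lemma measurableSet_Box (a : Fin d → ℝ) : MeasurableSet (Box a) :=
  MeasurableSet.univ_pi fun _ => measurableSet_Ico

/-- `treeLoss` as a function of parameter and sample. -/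
noncomputable def L (q : ℝ × ℝ × (Fin d → ℝ)) (s : (Fin d → ℝ) × ℝ) : ℝ := treeLoss s.1 s.2 q

lemma L_eq (q : ℝ × ℝ × (Fin d → ℝ)) (s : (Fin d → ℝ) × ℝ) :
    L q s = (s.2 - if s.1 ∈ Box q.2.2 then q.1 else q.2.1) ^ 2 := by
  by_cases h : s.1 ∈ Box q.2.2
  · have hm : s.1 ∈ Set.univ.pi fun j => Set.Ico (0 : ℝ) (q.2.2 j) := h
    have h1 : (Set.univ.pi fun j => Set.Ico (0 : ℝ) (q.2.2 j)).indicator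
        (fun _ => (1 : ℝ)) s.1 = 1 := Set.indicator_of_mem hm _
    have h2 : ((Set.univ.pi fun j => Set.Ico (0 : ℝ) (q.2.2 j))ᶜ).indicator
        (fun _ => (1 : ℝ)) s.1 = 0 :=
      Set.indicator_of_notMem (Set.notMem_compl_iff.mpr hm) _
    simp only [L, treeLoss, h1, h2, if_pos h]
    ring
  · have hm : s.1 ∉ Set.univ.pi fun j => Set.Ico (0 : ℝ) (q.2.2 j) := h
    have h1 : (Set.univ.pi fun j => Set.Ico (0 : ℝ) (q.2.2 j)).indicator
        (fun _ => (1 : ℝ)) s.1 = 0 := Set.indicator_of_notMem hm _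
    have h2 : ((Set.univ.pi fun j => Set.Ico (0 : ℝ) (q.2.2 j))ᶜ).indicator
        (fun _ => (1 : ℝ)) s.1 = 1 := Set.indicator_of_mem (Set.mem_compl hm) _
    simp only [L, treeLoss, h1, h2, if_neg h]
    ring

lemma L_nonneg (q : ℝ × ℝ × (Fin d → ℝ)) (s : (Fin d → ℝ) × ℝ) : 0 ≤ L q s := by
  rw [L_eq]; positivity

/-- Admissible parameter set. -/
def Adm (C : ℝ) (d : ℕ) : Set (ℝ × ℝ × (Fin d → ℝ)) :=
  {q | |q.1| ≤ C ∧ |q.2.1| ≤ C ∧ q.2.2 ∈ Set.Icc (0 : Fin d → ℝ) 1}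

lemma isCompact_Adm {C : ℝ} : IsCompact (Adm C d) := by
  have : Adm C d =
      (Set.Icc (-C) C) ×ˢ ((Set.Icc (-C) C) ×ˢ (Set.Icc (0 : Fin d → ℝ) 1)) := by
    ext q
    simp only [Adm, Set.mem_setOf_eq, Set.mem_prod, Set.mem_Icc, abs_le, Prod.le_def, Pi.le_def]
    try tauto
  rw [this]
  exact isCompact_Icc.prod (isCompact_Icc.prod isCompact_Icc)

lemma L_le {C : ℝ} {q : ℝ × ℝ × (Fin d → ℝ)} (hq : q ∈ Adm C d) (s : (Fin d → ℝ) × ℝ) :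
    L q s ≤ (|s.2| + C) ^ 2 := by
  rw [L_eq]
  have hC : 0 ≤ C := (abs_nonneg _).trans hq.1
  have h1 : |s.2 - if s.1 ∈ Box q.2.2 then q.1 else q.2.1| ≤ |s.2| + C := by
    refine (abs_sub _ _).trans ?_
    gcongr
    split_ifs
    · exact hq.1
    · exact hq.2.1
  calc (s.2 - if s.1 ∈ Box q.2.2 then q.1 else q.2.1) ^ 2
      = |s.2 - if s.1 ∈ Box q.2.2 then q.1 else q.2.1| ^ 2 := (sq_abs _).symm
    _ ≤ (|s.2| + C) ^ 2 := by
        have h0 : (0:ℝ) ≤ |s.2 - if s.1 ∈ Box q.2.2 then q.1 else q.2.1| := abs_nonneg _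
        exact pow_le_pow_left₀ h0 h1 2

lemma measurable_L (q : ℝ × ℝ × (Fin d → ℝ)) : Measurable (L q) := by
  simp only [funext (L_eq q)]
  have : Measurable fun s : (Fin d → ℝ) × ℝ =>
      (if s.1 ∈ Box q.2.2 then q.1 else q.2.1) :=
    Measurable.ite (measurable_fst (measurableSet_Box q.2.2)) measurable_const measurable_const
  exact (measurable_snd.sub this).pow_const 2


/-- Embedding of rational parameters. -/
noncomputable def e (r : ℚ × ℚ × (Fin d → ℚ)) : ℝ × ℝ × (Fin d → ℝ) :=
  ((r.1 : ℝ), (r.2.1 : ℝ), fun j => (r.2.2 j : ℝ))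

/-- Rational approximation of a coordinate of `a`, matching the indicator at `x`. -/
lemma rat_coord (a x : ℝ) (ha : a ∈ Set.Icc (0 : ℝ) 1) {η : ℝ} (hη : 0 < η) :
    ∃ b : ℚ, (b : ℝ) ∈ Set.Icc (0 : ℝ) 1 ∧ |(b : ℝ) - a| < η ∧
      ((0 ≤ x ∧ x < (b : ℝ)) ↔ (0 ≤ x ∧ x < a)) := by
  by_cases h : 0 ≤ x ∧ x < a
  · obtain ⟨b, hb1, hb2⟩ := exists_rat_btwn (show max x (a - η) < a from
      max_lt h.2 (by linarith))
    have hxb : x < (b : ℝ) := (le_max_left _ _).trans_lt hb1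
    have hab : a - η < (b : ℝ) := (le_max_right _ _).trans_lt hb1
    refine ⟨b, ⟨h.1.trans hxb.le, hb2.le.trans ha.2⟩, ?_, ?_⟩
    · rw [abs_lt]; constructor <;> linarith
    · exact ⟨fun _ => h, fun _ => ⟨h.1, hxb⟩⟩
  · by_cases h0 : a = 0
    · refine ⟨0, by norm_num, by simp [h0, hη], ?_⟩
      simp [h0]
    · have ha0 : 0 < a := lt_of_le_of_ne ha.1 (Ne.symm h0)
      obtain ⟨b, hb1, hb2⟩ := exists_rat_btwn (show max 0 (a - η) < a from
        max_lt ha0 (by linarith))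
      have hb0 : (0 : ℝ) < (b : ℝ) := (le_max_left _ _).trans_lt hb1
      have hab : a - η < (b : ℝ) := (le_max_right _ _).trans_lt hb1
      refine ⟨b, ⟨hb0.le, hb2.le.trans ha.2⟩, ?_, ?_⟩
      · rw [abs_lt]; constructor <;> linarith
      · constructor
        · rintro ⟨hx0, hxb⟩
          exact absurd ⟨hx0, hxb.trans hb2⟩ h
        · intro hx; exact absurd hx h

/-- Rational approximation of `α` within `[-C, C]`. -/
lemma rat_val {C : ℝ} (hC : 0 < C) {α : ℝ} (hα : |α| ≤ C) {η : ℝ} (hη : 0 < η) :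
    ∃ b : ℚ, |(b : ℝ)| ≤ C ∧ |(b : ℝ) - α| < η := by
  rw [abs_le] at hα
  obtain ⟨b, hb1, hb2⟩ := exists_rat_btwn (show max (-C) (α - η) < min C (α + η) by
    simp only [max_lt_iff, lt_min_iff]
    refine ⟨⟨by linarith, by linarith⟩, ⟨by linarith, by linarith⟩⟩)
  simp only [max_lt_iff, lt_min_iff] at hb1 hb2
  refine ⟨b, abs_le.2 ⟨hb1.1.le, hb2.1.le⟩, abs_lt.2 ⟨by linarith [hb1.2], by linarith [hb2.2]⟩⟩

/-- Rational approximation of the box parameter, matching the indicator at a given `x`. -/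
lemma rat_vec (a : Fin d → ℝ) (ha : a ∈ Set.Icc (0 : Fin d → ℝ) 1) (x : Fin d → ℝ)
    {η : ℝ} (hη : 0 < η) :
    ∃ b : Fin d → ℚ, (fun j => (b j : ℝ)) ∈ Set.Icc (0 : Fin d → ℝ) 1 ∧
      dist (fun j => (b j : ℝ)) a < η ∧
      ((x ∈ Box fun j => (b j : ℝ)) ↔ x ∈ Box a) := by
  have h : ∀ j, ∃ bj : ℚ, (bj : ℝ) ∈ Set.Icc (0 : ℝ) 1 ∧ |(bj : ℝ) - a j| < η ∧
      ((0 ≤ x j ∧ x j < (bj : ℝ)) ↔ (0 ≤ x j ∧ x j < a j)) := fun j =>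
    rat_coord (a j) (x j) ⟨ha.1 j, ha.2 j⟩ hη
  choose b hb1 hb2 hb3 using h
  refine ⟨b, ⟨fun j => (hb1 j).1, fun j => (hb1 j).2⟩, ?_, ?_⟩
  · rw [dist_pi_lt_iff hη]
    intro j
    rw [Real.dist_eq]
    exact hb2 j
  · simp only [mem_Box]
    exact ⟨fun hh j => (hb3 j).1 (hh j), fun hh j => (hb3 j).2 (hh j)⟩

/-- Key approximation property: rational admissible parameters approximate any admissible
parameter while (almost) preserving the loss at a fixed sample point. -/
lemma approx {C : ℝ} (hC : 0 < C) {q : ℝ × ℝ × (Fin d → ℝ)} (hq : q ∈ Adm C d)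
    (s : (Fin d → ℝ) × ℝ) {δ ε : ℝ} (hδ : 0 < δ) (hε : 0 < ε) :
    ∃ r : ℚ × ℚ × (Fin d → ℚ), e r ∈ Adm C d ∧ dist (e r) q < δ ∧
      L (e r) s ≤ L q s + ε := by
  obtain ⟨α, β, a⟩ := q
  obtain ⟨hα, hβ, ha⟩ := hq
  -- continuity of `u ↦ (s.2 - u)^2` at `α` and at `β`
  have hcont : ∀ u : ℝ, ∃ η > (0:ℝ), ∀ v : ℝ, |v - u| < η →
      |(s.2 - v)^2 - (s.2 - u)^2| < ε := by
    intro u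
    have h1 : ContinuousAt (fun v : ℝ => (s.2 - v)^2) u := by fun_prop
    rw [Metric.continuousAt_iff] at h1
    obtain ⟨η, hη, hball⟩ := h1 ε hε
    exact ⟨η, hη, fun v hv => by
      have := hball (show dist v u < η by rwa [Real.dist_eq])
      rwa [Real.dist_eq] at this⟩
  obtain ⟨ηα, hηα, hballα⟩ := hcont α
  obtain ⟨ηβ, hηβ, hballβ⟩ := hcont β
  obtain ⟨bα, hbα1, hbα2⟩ := rat_val hC hα (lt_min hδ hηα)
  obtain ⟨bβ, hbβ1, hbβ2⟩ := rat_val hC hβ (lt_min hδ hηβ)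
  obtain ⟨ba, hba1, hba2, hba3⟩ := rat_vec a ha s.1 hδ
  refine ⟨(bα, bβ, ba), ⟨hbα1, hbβ1, hba1⟩, ?_, ?_⟩
  · rw [e, Prod.dist_eq, Prod.dist_eq]
    simp only [sup_lt_iff]
    exact ⟨by rw [Real.dist_eq]; exact hbα2.trans_le (min_le_left _ _),
      by rw [Real.dist_eq]; exact hbβ2.trans_le (min_le_left _ _), hba2⟩
  · rw [L_eq, L_eq]
    simp only [e]
    by_cases hmem : s.1 ∈ Box a
    · simp only [hba3.2 hmem, hmem, ↓reduceIte]
      have := hballα (bα : ℝ) (hbα2.trans_le (min_le_right _ _))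
      nlinarith [abs_nonneg ((s.2 - (bα:ℝ))^2 - (s.2 - α)^2), abs_le.1 this.le]
    · rw [if_neg hmem]
      show (s.2 - if s.1 ∈ Box (fun j => (ba j : ℝ)) then (bα : ℝ) else (bβ : ℝ)) ^ 2 ≤ _
      rw [if_neg (fun hh => hmem (hba3.1 hh))]
      have := hballβ (bβ : ℝ) (hbβ2.trans_le (min_le_right _ _))
      nlinarith [abs_le.1 this.le]

/-- Continuity of the loss in the parameter, away from the boundary of the box. -/
lemma continuousAt_L (q : ℝ × ℝ × (Fin d → ℝ)) (s : (Fin d → ℝ) × ℝ)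
    (h : ∀ j, s.1 j ≠ q.2.2 j) : ContinuousAt (fun q' => L q' s) q := by
  have hev : ∀ᶠ q' : ℝ × ℝ × (Fin d → ℝ) in nhds q,
      (s.1 ∈ Box q'.2.2 ↔ s.1 ∈ Box q.2.2) := by
    have h1 : ∀ᶠ q' : ℝ × ℝ × (Fin d → ℝ) in nhds q,
        ∀ j, |q'.2.2 j - q.2.2 j| < |s.1 j - q.2.2 j| := by
      rw [eventually_all]
      intro j
      have hpos : 0 < |s.1 j - q.2.2 j| := abs_pos.2 (sub_ne_zero.2 (h j))
      have hc : Tendsto (fun q' : ℝ × ℝ × (Fin d → ℝ) => q'.2.2 j) (nhds q)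
          (nhds (q.2.2 j)) :=
        ((continuous_apply j).comp (continuous_snd.comp continuous_snd)).tendsto q
      have := hc (Metric.ball_mem_nhds (q.2.2 j) hpos)
      filter_upwards [this] with q' hq'
      simpa [Metric.mem_ball, Real.dist_eq] using hq'
    filter_upwards [h1] with q' hq'
    simp only [mem_Box]
    have hcoord : ∀ j, (0 ≤ s.1 j ∧ s.1 j < q'.2.2 j) ↔ (0 ≤ s.1 j ∧ s.1 j < q.2.2 j) := by
      intro j
      have habs := abs_sub_lt_iff.1 (hq' j)
      rcases lt_or_gt_of_ne (h j) with hlt | hgt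
      · have : |s.1 j - q.2.2 j| = q.2.2 j - s.1 j := by
          rw [abs_of_nonpos (by linarith)]; ring
        rw [this] at habs
        constructor <;> (rintro ⟨h0, _⟩; exact ⟨h0, by linarith [habs.1, habs.2]⟩)
      · have : |s.1 j - q.2.2 j| = s.1 j - q.2.2 j := abs_of_pos (by linarith)
        rw [this] at habs
        constructor <;> (rintro ⟨h0, hx⟩; constructor <;> linarith [habs.1, habs.2])
    exact ⟨fun hh j => (hcoord j).1 (hh j), fun hh j => (hcoord j).2 (hh j)⟩
  have hc : ContinuousAt (fun q' : ℝ × ℝ × (Fin d → ℝ) =>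
      (s.2 - if s.1 ∈ Box q.2.2 then q'.1 else q'.2.1) ^ 2) q := by
    by_cases hmem : s.1 ∈ Box q.2.2
    · simp only [if_pos hmem]; fun_prop
    · simp only [if_neg hmem]; fun_prop
  refine hc.congr ?_
  filter_upwards [hev] with q' hq'
  rw [L_eq]
  by_cases hmem : s.1 ∈ Box q.2.2
  · rw [if_pos (hq'.2 hmem), if_pos hmem]
  · rw [if_neg (fun hh => hmem (hq'.1 hh)), if_neg hmem]

/-- The "boundary" bad set for a parameter `q`. -/
def Bad (q : ℝ × ℝ × (Fin d → ℝ)) : Set ((Fin d → ℝ) × ℝ) :=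
  {s | ∃ j, s.1 j = q.2.2 j}

/-- Infimum of the loss over rational admissible parameters in a ball around `p`. -/
noncomputable def gInf (C : ℝ) (p : ℝ × ℝ × (Fin d → ℝ)) (δ : ℝ) (s : (Fin d → ℝ) × ℝ) : ℝ :=
  ⨅ t : {t : ℚ × ℚ × (Fin d → ℚ) // e t ∈ Adm C d ∧ dist (e t) p < δ}, L (e t) s

lemma gInf_nonneg (C : ℝ) (p : ℝ × ℝ × (Fin d → ℝ)) (δ : ℝ) (s : (Fin d → ℝ) × ℝ) :
    0 ≤ gInf C p δ s :=
  Real.iInf_nonneg fun t => L_nonneg _ _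

lemma bddBelow_L_range {ι : Sort*} (f : ι → ℝ × ℝ × (Fin d → ℝ)) (s : (Fin d → ℝ) × ℝ) :
    BddBelow (Set.range fun t : ι => L (f t) s) := by
  refine ⟨0, ?_⟩
  rintro y ⟨t, rfl⟩
  exact L_nonneg _ _

lemma bddBelow_gRange (C : ℝ) (p : ℝ × ℝ × (Fin d → ℝ)) (δ : ℝ) (s : (Fin d → ℝ) × ℝ) :
    BddBelow (Set.range
      fun t : {t : ℚ × ℚ × (Fin d → ℚ) // e t ∈ Adm C d ∧ dist (e t) p < δ} => L (e t) s) :=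
  bddBelow_L_range _ s

lemma measurable_gInf (C : ℝ) (p : ℝ × ℝ × (Fin d → ℝ)) (δ : ℝ) :
    Measurable (gInf C p δ) := by
  unfold gInf
  apply Measurable.iInf
  intro t
  exact measurable_L _

lemma gInf_le_L {C : ℝ} (hC : 0 < C) {p p' : ℝ × ℝ × (Fin d → ℝ)} {δ : ℝ}
    (hp' : p' ∈ Adm C d) (hdist : dist p' p < δ) (s : (Fin d → ℝ) × ℝ) :
    gInf C p δ s ≤ L p' s := by
  unfold gInf
  refine le_of_forall_pos_le_add fun ε hε => ?_
  obtain ⟨r, hr1, hr2, hr3⟩ := approx hC hp' s (show (0:ℝ) < δ - dist p' p by linarith) hε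
  have hmem : dist (e r) p < δ := by
    calc dist (e r) p ≤ dist (e r) p' + dist p' p := dist_triangle _ _ _
      _ < δ := by linarith
  exact (ciInf_le (bddBelow_gRange C p δ s) ⟨r, hr1, hmem⟩).trans hr3

lemma gInf_le_env {C : ℝ} (p : ℝ × ℝ × (Fin d → ℝ)) (δ : ℝ) (s : (Fin d → ℝ) × ℝ) :
    gInf C p δ s ≤ (|s.2| + C) ^ 2 := by
  unfold gInf
  rcases isEmpty_or_nonempty {t : ℚ × ℚ × (Fin d → ℚ) // e t ∈ Adm C d ∧ dist (e t) p < δ}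
    with hι | hι
  · rw [Real.iInf_of_isEmpty]
    positivity
  · obtain ⟨t⟩ := hι
    exact (ciInf_le (bddBelow_gRange C p δ s) t).trans (L_le t.2.1 s)

/-- Monotonicity of `gInf` under inclusion of balls. -/
lemma gInf_le_gInf {C : ℝ} {p p' : ℝ × ℝ × (Fin d → ℝ)} {δ δ' : ℝ}
    (hsub : ∀ t : ℚ × ℚ × (Fin d → ℚ), dist (e t) p' < δ' → dist (e t) p < δ)
    (hne : Nonempty {t : ℚ × ℚ × (Fin d → ℚ) // e t ∈ Adm C d ∧ dist (e t) p' < δ'})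
    (s : (Fin d → ℝ) × ℝ) :
    gInf C p δ s ≤ gInf C p' δ' s := by
  unfold gInf
  haveI := hne
  exact le_ciInf fun t => ciInf_le (bddBelow_gRange C p δ s) ⟨t.1, t.2.1, hsub t.1 t.2.2⟩

/-- Pointwise convergence of `gInf` to the loss, away from the boundary. -/
lemma tendsto_gInf {C : ℝ} (hC : 0 < C) {p : ℝ × ℝ × (Fin d → ℝ)} (hp : p ∈ Adm C d)
    {s : (Fin d → ℝ) × ℝ} (hs : s ∉ Bad p) :
    Tendsto (fun k : ℕ => gInf C p (1 / (k + 1)) s) atTop (nhds (L p s)) := by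
  have hcont : ContinuousAt (fun q' => L q' s) p := by
    refine continuousAt_L p s fun j hj => hs ⟨j, hj⟩
  rw [Metric.tendsto_atTop]
  intro ε hε
  rw [Metric.continuousAt_iff] at hcont
  obtain ⟨δ₀, hδ₀, hball⟩ := hcont (ε / 2) (by linarith)
  obtain ⟨K, hK⟩ := exists_nat_one_div_lt hδ₀
  refine ⟨K, fun k hk => ?_⟩
  have hkpos : (0:ℝ) < 1 / (k + 1) := by positivity
  have hle : (1:ℝ) / (k + 1) ≤ 1 / (K + 1) := by
    apply one_div_le_one_div_of_le (by positivity)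
    have : (K:ℝ) ≤ k := Nat.cast_le.2 hk
    linarith
  -- upper bound
  have hub : gInf C p (1 / (k + 1)) s ≤ L p s :=
    gInf_le_L hC hp (by simpa using hkpos) s
  -- lower bound
  obtain ⟨r₀, hr₀1, hr₀2, _⟩ := approx hC hp s hkpos one_pos
  haveI : Nonempty {t : ℚ × ℚ × (Fin d → ℚ) // e t ∈ Adm C d ∧ dist (e t) p < 1 / (k+1)} :=
    ⟨⟨r₀, hr₀1, hr₀2⟩⟩
  have hlb : L p s - ε / 2 ≤ gInf C p (1 / (k + 1)) s := by
    unfold gInf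
    refine le_ciInf fun t => ?_
    have hdist : dist (e t.1) p < δ₀ := lt_of_lt_of_le t.2.2 (hle.trans hK.le)
    have := hball hdist
    rw [Real.dist_eq, abs_lt] at this
    linarith [this.1]
  rw [Real.dist_eq, abs_lt]
  constructor <;> linarith

section Prob

variable {Ω : Type*} [MeasurableSpace Ω] {μ : Measure Ω} [IsProbabilityMeasure μ]
variable {X : Ω → (Fin d → ℝ)} {Z : Ω → ℝ}

/-- The boundary set `Bad q` is null for the law of `(X, Z)`. -/
lemma bad_null (hX : Measurable X) (hdens : Measure.map X μ ≪ (volume : Measure (Fin d → ℝ)))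
    (hZae : AEMeasurable Z μ) (q : ℝ × ℝ × (Fin d → ℝ)) :
    Measure.map (fun ω => (X ω, Z ω)) μ (Bad q) = 0 := by
  have hBad : Bad q = ⋃ j, (fun s : (Fin d → ℝ) × ℝ => s.1 j) ⁻¹' {q.2.2 j} := by
    ext s; simp [Bad]
  have hmeasj : ∀ j : Fin d, MeasurableSet ((fun s : (Fin d → ℝ) × ℝ => s.1 j) ⁻¹' {q.2.2 j}) :=
    fun j => ((measurable_pi_apply j).comp measurable_fst) (measurableSet_singleton (q.2.2 j))
  have hXZ : AEMeasurable (fun ω => (X ω, Z ω)) μ := hX.aemeasurable.prodMk hZae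
  rw [hBad, Measure.map_apply_of_aemeasurable hXZ (MeasurableSet.iUnion hmeasj),
    Set.preimage_iUnion]
  refine measure_iUnion_null fun j => ?_
  have hpre : (fun ω => (X ω, Z ω)) ⁻¹' ((fun s : (Fin d → ℝ) × ℝ => s.1 j) ⁻¹' {q.2.2 j})
      = X ⁻¹' ((fun x : Fin d → ℝ => x j) ⁻¹' {q.2.2 j}) := rfl
  rw [hpre, ← Measure.map_apply hX ((measurable_pi_apply j) (measurableSet_singleton _))]
  refine hdens ?_
  have : ((fun x : Fin d → ℝ => x j) ⁻¹' {q.2.2 j}) = {x : Fin d → ℝ | x j = q.2.2 j} := by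
    ext x; simp
  rw [this, volume_pi]
  exact Measure.pi_hyperplane _ j _

/-- The envelope `(|z| + C)²` is integrable for the law of `(X, Z)`. -/
lemma env_int (hX : Measurable X) (hZ : MemLp Z 2 μ) (C : ℝ) :
    Integrable (fun s : (Fin d → ℝ) × ℝ => (|s.2| + C) ^ 2)
      (Measure.map (fun ω => (X ω, Z ω)) μ) := by
  have hXZ : AEMeasurable (fun ω => (X ω, Z ω)) μ :=
    hX.aemeasurable.prodMk hZ.aestronglyMeasurable.aemeasurable
  have hcont : Continuous fun s : (Fin d → ℝ) × ℝ => (|s.2| + C) ^ 2 := by fun_prop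
  rw [integrable_map_measure hcont.aestronglyMeasurable hXZ]
  have hmem : MemLp (fun ω => |Z ω| + C) 2 μ := by
    have h1 : MemLp (|Z|) 2 μ := hZ.abs
    have h2 : MemLp (fun _ : Ω => C) 2 μ := memLp_const C
    exact h1.add h2
  have := hmem.integrable_sq
  exact this.congr (ae_of_all _ fun ω => rfl)

/-- A function dominated by the envelope is integrable. -/
lemma integrable_of_le_env {C : ℝ} {π : Measure ((Fin d → ℝ) × ℝ)}
    (henv : Integrable (fun s : (Fin d → ℝ) × ℝ => (|s.2| + C) ^ 2) π)
    {h : ((Fin d → ℝ) × ℝ) → ℝ} (hm : Measurable h)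
    (h0 : ∀ s, 0 ≤ h s) (hle : ∀ s, h s ≤ (|s.2| + C) ^ 2) : Integrable h π :=
  henv.mono' hm.aestronglyMeasurable (ae_of_all _ fun s => by
    rw [Real.norm_eq_abs, abs_of_nonneg (h0 s)]; exact hle s)

/-- Strong law of large numbers for functions of the i.i.d. samples. -/
lemma slln (hX : Measurable X) (hZ : MemLp Z 2 μ)
    {W : ℕ → Ω → (Fin d → ℝ) × ℝ} (hWmeas : ∀ m, Measurable (W m))
    (hWindep : iIndepFun W μ)
    (hWident : ∀ m, Measure.map (W m) μ = Measure.map (fun ω => (X ω, Z ω)) μ)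
    (h : ((Fin d → ℝ) × ℝ) → ℝ) (hm : Measurable h)
    (hint : Integrable h (Measure.map (fun ω => (X ω, Z ω)) μ)) :
    ∀ᵐ ω ∂μ, Tendsto (fun M : ℕ => (M : ℝ)⁻¹ * ∑ m ∈ Finset.range M, h (W m ω)) atTop
      (nhds (∫ s, h s ∂(Measure.map (fun ω => (X ω, Z ω)) μ))) := by
  have hint0 : Integrable (h ∘ W 0) μ := by
    rw [← integrable_map_measure hm.aestronglyMeasurable (hWmeas 0).aemeasurable, hWident 0]
    exact hint
  have hindep : Pairwise (Function.onFun (IndepFun · · μ) fun i => h ∘ W i) := fun i j hij =>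
    (hWindep.indepFun hij).comp hm hm
  have hident : ∀ i, IdentDistrib (h ∘ W i) (h ∘ W 0) μ μ := fun i =>
    IdentDistrib.comp ⟨(hWmeas i).aemeasurable, (hWmeas 0).aemeasurable,
      by rw [hWident i, hWident 0]⟩ hm
  have hlaw := strong_law_ae_real (fun i => h ∘ W i) hint0 hindep hident
  have hEeq : (μ[h ∘ W 0]) = ∫ s, h s ∂(Measure.map (fun ω => (X ω, Z ω)) μ) := by
    rw [← hWident 0, integral_map (hWmeas 0).aemeasurable hm.aestronglyMeasurable]
    rfl
  filter_upwards [hlaw] with ω hω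
  rw [hEeq] at hω
  have : (fun M : ℕ => (M : ℝ)⁻¹ * ∑ m ∈ Finset.range M, h (W m ω))
      = fun n : ℕ => (∑ i ∈ Finset.range n, (h ∘ W i) ω) / n := by
    funext n
    rw [div_eq_inv_mul]
    rfl
  rw [this]
  exact hω

/-- Dominated convergence: the integral of `gInf` converges to the integral of the loss. -/
lemma tendsto_integral_gInf {C : ℝ} (hC : 0 < C) (hX : Measurable X)
    (hdens : Measure.map X μ ≪ (volume : Measure (Fin d → ℝ))) (hZ : MemLp Z 2 μ)
    {p : ℝ × ℝ × (Fin d → ℝ)} (hp : p ∈ Adm C d) :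
    Tendsto (fun k : ℕ => ∫ s, gInf C p (1 / (k + 1)) s
        ∂(Measure.map (fun ω => (X ω, Z ω)) μ)) atTop
      (nhds (∫ s, L p s ∂(Measure.map (fun ω => (X ω, Z ω)) μ))) := by
  refine tendsto_integral_of_dominated_convergence (fun s => (|s.2| + C) ^ 2)
    (fun k => (measurable_gInf C p _).aestronglyMeasurable) (env_int hX hZ C)
    (fun k => ae_of_all _ fun s => ?_) ?_
  · rw [Real.norm_eq_abs, abs_of_nonneg (gInf_nonneg C p _ s)]
    exact gInf_le_env p _ s
  · filter_upwards [measure_eq_zero_iff_ae_notMem.1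
      (bad_null hX hdens hZ.aestronglyMeasurable.aemeasurable p)] with s hs
    exact tendsto_gInf hC hp hs

/-- Approximation of the population risk by rational admissible parameters. -/
lemma nu_approx {C : ℝ} (hC : 0 < C) (hX : Measurable X)
    (hdens : Measure.map X μ ≪ (volume : Measure (Fin d → ℝ))) (hZ : MemLp Z 2 μ)
    {p : ℝ × ℝ × (Fin d → ℝ)} (hp : p ∈ Adm C d) {ε : ℝ} (hε : 0 < ε) :
    ∃ r : ℚ × ℚ × (Fin d → ℚ), e r ∈ Adm C d ∧
      ∫ s, L (e r) s ∂(Measure.map (fun ω => (X ω, Z ω)) μ)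
        < (∫ s, L p s ∂(Measure.map (fun ω => (X ω, Z ω)) μ)) + ε := by
  have hex : ∀ k : ℕ, ∃ r : ℚ × ℚ × (Fin d → ℚ), e r ∈ Adm C d ∧ dist (e r) p < 1 / (k + 1) :=
    fun k => by
      obtain ⟨r, h1, h2, _⟩ := approx hC hp (0, 0) (show (0:ℝ) < 1 / (k+1) by positivity) one_pos
      exact ⟨r, h1, h2⟩
  choose rs hrs1 hrs2 using hex
  have hrt : Tendsto (fun k => e (rs k)) atTop (nhds p) := by
    rw [tendsto_iff_dist_tendsto_zero]
    refine squeeze_zero (fun k => dist_nonneg) (fun k => (hrs2 k).le) ?_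
    exact tendsto_one_div_add_atTop_nhds_zero_nat
  have hconv : Tendsto (fun k => ∫ s, L (e (rs k)) s ∂(Measure.map (fun ω => (X ω, Z ω)) μ))
      atTop (nhds (∫ s, L p s ∂(Measure.map (fun ω => (X ω, Z ω)) μ))) := by
    refine tendsto_integral_of_dominated_convergence (fun s => (|s.2| + C) ^ 2)
      (fun k => (measurable_L _).aestronglyMeasurable) (env_int hX hZ C)
      (fun k => ae_of_all _ fun s => ?_) ?_
    · rw [Real.norm_eq_abs, abs_of_nonneg (L_nonneg _ _)]
      exact L_le (hrs1 k) s
    · filter_upwards [measure_eq_zero_iff_ae_notMem.1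
        (bad_null hX hdens hZ.aestronglyMeasurable.aemeasurable p)] with s hs
      exact ((continuousAt_L p s fun j hj => hs ⟨j, hj⟩).tendsto).comp hrt
  obtain ⟨k, hk⟩ := (hconv.eventually_lt_const (lt_add_of_pos_right _ hε)).exists
  exact ⟨rs k, hrs1 k, hk⟩

end Prob
end TreeAux


open TreeAux

/-- Let `X` be valued in `[0,1]^d` with a density w.r.t. Lebesgue measure, `Z` square
integrable, and `((X_m, Z_m))` i.i.d. copies of `(X, Z)`.  With
`ν_M(α, β, a) = (1/M) Σ_{m=1}^M (Z_m − α·1{X_m ∈ B_a} − β·1{X_m ∉ B_a})²` and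
`ν(α, β, a) = E[(Z − α·1{X ∈ B_a} − β·1{X ∉ B_a})²]`, for every `C > 0`, almost surely
`inf_{a ∈ [0,1]^d, |α| ≤ C, |β| ≤ C} ν_M(α, β, a) → inf_{a ∈ [0,1]^d, |α| ≤ C, |β| ≤ C} ν(α, β, a)`
as `M → ∞`. -/
theorem tendsto_inf_empirical_tree_loss {Ω : Type*} [MeasurableSpace Ω]
    (μ : Measure Ω) [IsProbabilityMeasure μ]
    {d : ℕ} (X : Ω → (Fin d → ℝ)) (hX : Measurable X)
    (hXval : ∀ ω, X ω ∈ Set.Icc (0 : Fin d → ℝ) 1)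
    (hdens : Measure.map X μ ≪ (volume : Measure (Fin d → ℝ)))
    (Z : Ω → ℝ) (hZ : MemLp Z 2 μ)
    (W : ℕ → Ω → (Fin d → ℝ) × ℝ) (hWmeas : ∀ m, Measurable (W m))
    (hWindep : iIndepFun W μ)
    (hWident : ∀ m, Measure.map (W m) μ = Measure.map (fun ω => (X ω, Z ω)) μ) :
    ∀ C > (0 : ℝ), ∀ᵐ ω ∂μ,
      Tendsto (fun M : ℕ =>
          ⨅ p : {q : ℝ × ℝ × (Fin d → ℝ) //
              |q.1| ≤ C ∧ |q.2.1| ≤ C ∧ q.2.2 ∈ Set.Icc (0 : Fin d → ℝ) 1},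
            (M : ℝ)⁻¹ * (∑ m ∈ Finset.range M, treeLoss (W m ω).1 (W m ω).2 ↑p))
        atTop
        (nhds (⨅ p : {q : ℝ × ℝ × (Fin d → ℝ) //
              |q.1| ≤ C ∧ |q.2.1| ≤ C ∧ q.2.2 ∈ Set.Icc (0 : Fin d → ℝ) 1},
            ∫ ω', treeLoss (X ω') (Z ω') ↑p ∂μ)) := by
  intro C hC
  classical
  have hZae : AEMeasurable Z μ := hZ.aestronglyMeasurable.aemeasurable
  have hXZ : AEMeasurable (fun ω => (X ω, Z ω)) μ := hX.aemeasurable.prodMk hZae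
  set π : Measure ((Fin d → ℝ) × ℝ) := Measure.map (fun ω => (X ω, Z ω)) μ with hπdef
  have henv : Integrable (fun s : (Fin d → ℝ) × ℝ => (|s.2| + C) ^ 2) π := env_int hX hZ C
  set ν : (ℝ × ℝ × (Fin d → ℝ)) → ℝ := fun q => ∫ s, L q s ∂π with hνdef
  haveI hPne : Nonempty {q : ℝ × ℝ × (Fin d → ℝ) //
      |q.1| ≤ C ∧ |q.2.1| ≤ C ∧ q.2.2 ∈ Set.Icc (0 : Fin d → ℝ) 1} :=
    ⟨⟨(0, 0, 0), by
      refine ⟨by simpa using hC.le, by simpa using hC.le, ?_⟩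
      exact ⟨le_refl _, fun j => zero_le_one⟩⟩⟩
  have hν_eq : ∀ q : ℝ × ℝ × (Fin d → ℝ), ∫ ω', treeLoss (X ω') (Z ω') q ∂μ = ν q := by
    intro q
    show _ = ∫ s, L q s ∂π
    rw [hπdef, integral_map hXZ (measurable_L q).aestronglyMeasurable]
    rfl
  set I : ℝ := ⨅ p : {q : ℝ × ℝ × (Fin d → ℝ) //
      |q.1| ≤ C ∧ |q.2.1| ≤ C ∧ q.2.2 ∈ Set.Icc (0 : Fin d → ℝ) 1}, ν ↑p with hIdef
  have hgoal_rw : (⨅ p : {q : ℝ × ℝ × (Fin d → ℝ) //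
      |q.1| ≤ C ∧ |q.2.1| ≤ C ∧ q.2.2 ∈ Set.Icc (0 : Fin d → ℝ) 1},
        ∫ ω', treeLoss (X ω') (Z ω') ↑p ∂μ) = I := iInf_congr fun p => hν_eq ↑p
  have hbddν : BddBelow (Set.range fun p : {q : ℝ × ℝ × (Fin d → ℝ) //
      |q.1| ≤ C ∧ |q.2.1| ≤ C ∧ q.2.2 ∈ Set.Icc (0 : Fin d → ℝ) 1} => ν ↑p) := by
    refine ⟨0, ?_⟩
    rintro y ⟨p, rfl⟩
    exact integral_nonneg fun s => L_nonneg _ _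
  -- almost sure events: SLLN for the countable rational families
  have hE1 : ∀ᵐ ω ∂μ, ∀ r : ℚ × ℚ × (Fin d → ℚ), e r ∈ Adm C d →
      Tendsto (fun M : ℕ => (M : ℝ)⁻¹ * ∑ m ∈ Finset.range M, L (e r) (W m ω)) atTop
        (nhds (ν (e r))) := by
    rw [ae_all_iff]
    intro r
    by_cases hr : e r ∈ Adm C d
    · have hint : Integrable (L (e r)) π :=
        integrable_of_le_env henv (measurable_L _) (fun s => L_nonneg _ _) (fun s => L_le hr s)
      filter_upwards [slln hX hZ hWmeas hWindep hWident (L (e r)) (measurable_L _) hint]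
        with ω hω _
      exact hω
    · exact ae_of_all _ fun ω h => absurd h hr
  have hE2 : ∀ᵐ ω ∂μ, ∀ r : ℚ × ℚ × (Fin d → ℚ), ∀ n : ℕ, e r ∈ Adm C d →
      Tendsto (fun M : ℕ => (M : ℝ)⁻¹ *
          ∑ m ∈ Finset.range M, gInf C (e r) (1 / (n + 1)) (W m ω)) atTop
        (nhds (∫ s, gInf C (e r) (1 / (n + 1)) s ∂π)) := by
    rw [ae_all_iff]
    intro r
    rw [ae_all_iff]
    intro n
    by_cases hr : e r ∈ Adm C d
    · have hint : Integrable (gInf C (e r) (1 / (n + 1))) π :=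
        integrable_of_le_env henv (measurable_gInf _ _ _) (fun s => gInf_nonneg _ _ _ s)
          (fun s => gInf_le_env _ _ s)
      filter_upwards [slln hX hZ hWmeas hWindep hWident _ (measurable_gInf C (e r) (1/(n+1)))
        hint] with ω hω _
      exact hω
    · exact ae_of_all _ fun ω h => absurd h hr
  filter_upwards [hE1, hE2] with ω hω1 hω2
  rw [hgoal_rw]
  have hfun : (fun M : ℕ => ⨅ p : {q : ℝ × ℝ × (Fin d → ℝ) //
      |q.1| ≤ C ∧ |q.2.1| ≤ C ∧ q.2.2 ∈ Set.Icc (0 : Fin d → ℝ) 1},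
        (M : ℝ)⁻¹ * (∑ m ∈ Finset.range M, treeLoss (W m ω).1 (W m ω).2 ↑p))
      = fun M : ℕ => ⨅ p : {q : ℝ × ℝ × (Fin d → ℝ) //
      |q.1| ≤ C ∧ |q.2.1| ≤ C ∧ q.2.2 ∈ Set.Icc (0 : Fin d → ℝ) 1},
        (M : ℝ)⁻¹ * (∑ m ∈ Finset.range M, L (↑p) (W m ω)) := rfl
  rw [hfun]
  rw [Metric.tendsto_nhds]
  intro ε hε
  have hbddM : ∀ M : ℕ, BddBelow (Set.range fun p : {q : ℝ × ℝ × (Fin d → ℝ) //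
      |q.1| ≤ C ∧ |q.2.1| ≤ C ∧ q.2.2 ∈ Set.Icc (0 : Fin d → ℝ) 1} =>
        (M : ℝ)⁻¹ * (∑ m ∈ Finset.range M, L (↑p) (W m ω))) := by
    intro M
    refine ⟨0, ?_⟩
    rintro y ⟨p, rfl⟩
    exact mul_nonneg (inv_nonneg.2 (Nat.cast_nonneg M))
      (Finset.sum_nonneg fun m _ => L_nonneg (↑p) (W m ω))
  -- upper bound
  obtain ⟨p₀, hp₀⟩ : ∃ p : {q : ℝ × ℝ × (Fin d → ℝ) //
      |q.1| ≤ C ∧ |q.2.1| ≤ C ∧ q.2.2 ∈ Set.Icc (0 : Fin d → ℝ) 1}, ν ↑p < I + ε / 4 :=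
    exists_lt_of_ciInf_lt (lt_add_of_pos_right I (by linarith))
  obtain ⟨r₀, hr₀A, hr₀ν⟩ := nu_approx hC hX hdens hZ (show ↑p₀ ∈ Adm C d from p₀.2)
    (show (0:ℝ) < ε/4 by linarith)
  have hupev : ∀ᶠ M : ℕ in atTop,
      (M : ℝ)⁻¹ * ∑ m ∈ Finset.range M, L (e r₀) (W m ω) < I + ε / 2 :=
    (hω1 r₀ hr₀A).eventually_lt_const (by
      have : ν (e r₀) < ν ↑p₀ + ε / 4 := hr₀ν
      linarith)
  -- lower bound: compact cover
  have hcov : ∀ p ∈ Adm C d, ∃ (r : ℚ × ℚ × (Fin d → ℚ)) (n : ℕ), e r ∈ Adm C d ∧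
      p ∈ Metric.ball (e r) (1 / (n + 1)) ∧
      I - ε / 2 < ∫ s, gInf C (e r) (1 / (n + 1)) s ∂π := by
    intro p hp
    have hInu : I ≤ ν p := ciInf_le hbddν ⟨p, hp⟩
    have hconv := tendsto_integral_gInf hC hX hdens hZ hp
    obtain ⟨k, hk⟩ := (hconv.eventually_const_lt
      (show I - ε / 2 < ν p by linarith)).exists
    obtain ⟨r, hr1, hr2, _⟩ := approx hC hp ((0 : Fin d → ℝ), (0:ℝ))
      (show (0:ℝ) < 1 / (2 * k + 2) by positivity) one_pos
    refine ⟨r, 2 * k + 1, hr1, ?_, ?_⟩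
    · rw [Metric.mem_ball, dist_comm]
      have hcast : ((2 * k + 1 : ℕ) : ℝ) + 1 = 2 * k + 2 := by push_cast; ring
      rw [hcast]
      exact hr2
    · have hcast : ((2 * k + 1 : ℕ) : ℝ) + 1 = 2 * k + 2 := by push_cast; ring
      have hmono : ∀ s, gInf C p (1 / (k + 1)) s ≤ gInf C (e r) (1 / (2 * k + 2)) s := by
        intro s
        refine gInf_le_gInf (fun t ht => ?_) ⟨⟨r, hr1, by simpa using (by positivity : (0:ℝ) < 1/(2*k+2))⟩⟩ s
        calc dist (e t) p ≤ dist (e t) (e r) + dist (e r) p := dist_triangle _ _ _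
          _ < 1 / (2 * k + 2) + 1 / (2 * k + 2) := add_lt_add ht hr2
          _ = 1 / (k + 1) := by
              have h1 : (2 * (k:ℝ) + 2) ≠ 0 := by positivity
              have h2 : ((k:ℝ) + 1) ≠ 0 := by positivity
              field_simp
              ring
      have hintp : Integrable (gInf C p (1 / (k + 1))) π :=
        integrable_of_le_env henv (measurable_gInf _ _ _) (gInf_nonneg _ _ _) (gInf_le_env _ _)
      have hintr : Integrable (gInf C (e r) (1 / (2 * k + 2))) π :=
        integrable_of_le_env henv (measurable_gInf _ _ _) (gInf_nonneg _ _ _) (gInf_le_env _ _)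
      have hle : (∫ s, gInf C p (1 / (k + 1)) s ∂π)
          ≤ ∫ s, gInf C (e r) (1 / (2 * k + 2)) s ∂π :=
        integral_mono hintp hintr hmono
      rw [hcast]
      linarith
  set U : (ℚ × ℚ × (Fin d → ℚ)) × ℕ → Set (ℝ × ℝ × (Fin d → ℝ)) := fun i =>
    if e i.1 ∈ Adm C d ∧ I - ε / 2 < ∫ s, gInf C (e i.1) (1 / (i.2 + 1)) s ∂π
    then Metric.ball (e i.1) (1 / (i.2 + 1)) else ∅ with hUdef
  have hUopen : ∀ i, IsOpen (U i) := by
    intro i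
    simp only [hUdef]
    split_ifs
    · exact Metric.isOpen_ball
    · exact isOpen_empty
  have hUcov : Adm C d ⊆ ⋃ i, U i := by
    intro p hp
    obtain ⟨r, n, h1, h2, h3⟩ := hcov p hp
    refine Set.mem_iUnion.2 ⟨(r, n), ?_⟩
    simp only [hUdef]
    rw [if_pos (⟨h1, h3⟩ : e (r,n).1 ∈ Adm C d ∧ _)]
    exact h2
  obtain ⟨Fs, hFs⟩ := isCompact_Adm.elim_finite_subcover U hUopen hUcov
  have hlowev : ∀ᶠ M : ℕ in atTop, ∀ i ∈ Fs,
      (e i.1 ∈ Adm C d ∧ I - ε / 2 < ∫ s, gInf C (e i.1) (1 / (i.2 + 1)) s ∂π) →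
      I - ε / 2 < (M : ℝ)⁻¹ * ∑ m ∈ Finset.range M, gInf C (e i.1) (1 / (i.2 + 1)) (W m ω) := by
    rw [eventually_all_finset]
    intro i _
    by_cases hcond : e i.1 ∈ Adm C d ∧ I - ε / 2 < ∫ s, gInf C (e i.1) (1 / (i.2 + 1)) s ∂π
    · filter_upwards [(hω2 i.1 i.2 hcond.1).eventually_const_lt hcond.2] with M hM _
      exact hM
    · exact Eventually.of_forall fun M h => absurd h hcond
  filter_upwards [hupev, hlowev] with M hup hlow
  rw [Real.dist_eq, abs_sub_lt_iff]
  have hinf_le : (⨅ p : {q : ℝ × ℝ × (Fin d → ℝ) //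
      |q.1| ≤ C ∧ |q.2.1| ≤ C ∧ q.2.2 ∈ Set.Icc (0 : Fin d → ℝ) 1},
        (M : ℝ)⁻¹ * (∑ m ∈ Finset.range M, L (↑p) (W m ω)))
      ≤ (M : ℝ)⁻¹ * ∑ m ∈ Finset.range M, L (e r₀) (W m ω) :=
    ciInf_le (hbddM M) ⟨e r₀, hr₀A⟩
  have hinf_ge : I - ε / 2 ≤ ⨅ p : {q : ℝ × ℝ × (Fin d → ℝ) //
      |q.1| ≤ C ∧ |q.2.1| ≤ C ∧ q.2.2 ∈ Set.Icc (0 : Fin d → ℝ) 1},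
        (M : ℝ)⁻¹ * (∑ m ∈ Finset.range M, L (↑p) (W m ω)) := by
    refine le_ciInf fun p => ?_
    have hpA : (p : ℝ × ℝ × (Fin d → ℝ)) ∈ Adm C d := p.2
    obtain ⟨i, hiF, hiU⟩ := Set.mem_iUnion₂.1 (hFs hpA)
    by_cases hcond : e i.1 ∈ Adm C d ∧ I - ε / 2 < ∫ s, gInf C (e i.1) (1 / (i.2 + 1)) s ∂π
    · simp only [hUdef, if_pos hcond] at hiU
      rw [Metric.mem_ball] at hiU
      have hptle : ∀ s, gInf C (e i.1) (1 / (i.2 + 1)) s ≤ L (↑p) s := fun s =>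
        gInf_le_L hC hpA hiU s
      have hsum : (M : ℝ)⁻¹ * ∑ m ∈ Finset.range M, gInf C (e i.1) (1 / (i.2 + 1)) (W m ω)
          ≤ (M : ℝ)⁻¹ * (∑ m ∈ Finset.range M, L (↑p) (W m ω)) := by
        refine mul_le_mul_of_nonneg_left ?_ (inv_nonneg.2 (Nat.cast_nonneg M))
        exact Finset.sum_le_sum fun m _ => hptle (W m ω)
      have := hlow i hiF hcond
      linarith
    · simp only [hUdef, if_neg hcond] at hiU
      exact absurd hiU (Set.notMem_empty _)
  constructor
  · linarith [lt_of_le_of_lt hinf_le hup]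
  · linarith
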